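/- Let $2 \le p < \gamma \le 3$, and let $K$ be a positive integer. Suppose given $x_0, \ldots, x_K \in \mathbb{R}^d$, reals $A^{rj}_{kl}$ for $0 \le k \le l \le K$ and $1 \le r,j \le d$ satisfying the consistency condition $A^{rj}_{km} = A^{rj}_{kl} + A^{rj}_{lm} + (x^r_l - x^r_k)(x^j_m - x^j_l)$ for $k \le l \le m$, and a superadditive control $\omega_{kl} \ge 0$ ($\omega_{km} \ge \omega_{kl} + \omega_{lm}$) with $|x_l - x_k|^p \le \omega_{kl}$ and $|A^{rj}_{kl}| \le \omega_{kl}^{2/p}$. Let $f = (f^i_j)$ be bounded, differentiable, with bounded derivative and with the derivative globally Hölder of exponent $\gamma - 2$, all with constant $M_0$. Given $y_0$, define $y_k$ by the Milstein-type scheme $y^i_{k+1} = y^i_k + f^i_j(y_k)(x^j_{k+1}-x^j_k) + f^h_r(y_k)\partial_h f^i_j(y_k) A^{rj}_{k,k+1}$ (summation over repeated indices), and set $J^i_{kl} = y^i_l - y^i_k - f^i_j(y_k)(x^j_l - x^j_k) - f^h_r(y_k)\partial_h f^i_j(y_k) A^{rj}_{kl}$. Then there exist constants $C, M > 0$, depending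 only on $n, d, \gamma, p, \omega_{0K}, M_0$, such that $|J_{kl}| \le M\,\omega_{kl}^{\gamma/p}$ and $|y_l - y_k| \le C\,\omega_{kl}^{1/p}$ for all $0 \le k \le l \le K$. -/

import Mathlib

namespace DavieAux

open Finset

lemma abs_sub_sub_le (a b c : ℝ) : |a - b - c| ≤ |a| + |b| + |c| :=
  abs_le.mpr ⟨by linarith [neg_abs_le a, le_abs_self b, le_abs_self c],
    by linarith [le_abs_self a, neg_abs_le b, neg_abs_le c]⟩

lemma abs_add₃ (a b c : ℝ) : |a + b + c| ≤ |a| + |b| + |c| :=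
  abs_le.mpr ⟨by linarith [neg_abs_le a, neg_abs_le b, neg_abs_le c],
    by linarith [le_abs_self a, le_abs_self b, le_abs_self c]⟩

lemma abs_decomp (a b c : ℝ) : |a| ≤ |a - b - c| + |b| + |c| :=
  abs_le.mpr ⟨by linarith [neg_abs_le (a - b - c), neg_abs_le b, neg_abs_le c],
    by linarith [le_abs_self (a - b - c), le_abs_self b, le_abs_self c]⟩

lemma abs_sum_le {m : ℕ} (t : Fin m → ℝ) (c : ℝ) (h : ∀ j, |t j| ≤ c) :
    |∑ j, t j| ≤ (m : ℝ) * c := by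
  calc |∑ j, t j| ≤ ∑ j, |t j| := Finset.abs_sum_le_sum_abs _ _
    _ ≤ ∑ _j : Fin m, c := Finset.sum_le_sum (fun j _ => h j)
    _ = (m : ℝ) * c := by simp [Finset.sum_const, Finset.card_univ, nsmul_eq_mul]

lemma abs_sum2_le {m : ℕ} (t : Fin m → Fin m → ℝ) (c : ℝ) (hc : 0 ≤ c)
    (h : ∀ r j, |t r j| ≤ c) : |∑ r, ∑ j, t r j| ≤ (m : ℝ) * ((m : ℝ) * c) := by
  refine abs_sum_le _ _ (fun r => abs_sum_le _ _ (fun j => h r j))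

lemma clm_apply_eq_sum {n : ℕ} (L : (Fin n → ℝ) →L[ℝ] ℝ) (w : Fin n → ℝ) :
    L w = ∑ h, w h * L (Pi.single h 1) := by
  have hw : w = ∑ h, w h • (Pi.single h (1:ℝ) : Fin n → ℝ) := by
    funext a
    rw [Finset.sum_apply]
    simp [Pi.single_apply]
  conv_lhs => rw [hw]
  rw [map_sum]
  exact Finset.sum_congr rfl fun h _ => by rw [map_smul, smul_eq_mul]

lemma norm_pi_single_one_le {n : ℕ} (h : Fin n) : ‖(Pi.single h 1 : Fin n → ℝ)‖ ≤ 1 := by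
  rw [pi_norm_le_iff_of_nonneg zero_le_one]
  intro i
  rw [Real.norm_eq_abs, Pi.single_apply]
  split <;> simp

lemma clm_single_le {n : ℕ} (L : (Fin n → ℝ) →L[ℝ] ℝ) {M₀ : ℝ} (hL : ‖L‖ ≤ M₀) (h : Fin n) :
    |L (Pi.single h 1)| ≤ M₀ := by
  have h0 : (0:ℝ) ≤ M₀ := (norm_nonneg L).trans hL
  calc |L (Pi.single h 1)| = ‖L (Pi.single h 1)‖ := (Real.norm_eq_abs _).symm
    _ ≤ ‖L‖ * ‖(Pi.single h 1 : Fin n → ℝ)‖ := L.le_opNorm _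
    _ ≤ M₀ * 1 := mul_le_mul hL (norm_pi_single_one_le h) (norm_nonneg _) h0
    _ = M₀ := mul_one _

lemma clm_apply_le {n : ℕ} (L : (Fin n → ℝ) →L[ℝ] ℝ) {M₀ : ℝ} (hL : ‖L‖ ≤ M₀)
    (v : Fin n → ℝ) : |L v| ≤ M₀ * ‖v‖ := by
  calc |L v| = ‖L v‖ := (Real.norm_eq_abs _).symm
    _ ≤ ‖L‖ * ‖v‖ := L.le_opNorm _
    _ ≤ M₀ * ‖v‖ := mul_le_mul_of_nonneg_right hL (norm_nonneg _)

lemma lip_aux {n : ℕ} (f : (Fin n → ℝ) → ℝ) (M₀ : ℝ)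
    (hd : Differentiable ℝ f) (hb : ∀ z, ‖fderiv ℝ f z‖ ≤ M₀) (u v : Fin n → ℝ) :
    |f u - f v| ≤ M₀ * ‖u - v‖ := by
  have := Convex.norm_image_sub_le_of_norm_fderiv_le (fun z _ => (hd z))
    (fun z _ => hb z) (convex_univ) (Set.mem_univ v) (Set.mem_univ u)
  simpa [Real.norm_eq_abs] using this

lemma mem_segment_norm_sub_le {n : ℕ} {z w u : Fin n → ℝ} (hu : u ∈ segment ℝ z w) :
    ‖u - z‖ ≤ ‖w - z‖ := by
  obtain ⟨a, b, ha, hb, hab, rfl⟩ := hu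
  have h1 : a • z + b • w - z = b • (w - z) := by
    have : a = 1 - b := by linarith
    subst this
    module
  rw [h1, norm_smul, Real.norm_eq_abs, abs_of_nonneg hb]
  exact mul_le_of_le_one_left (norm_nonneg _) (by linarith)

lemma taylor_aux {n : ℕ} (f : (Fin n → ℝ) → ℝ) (M₀ β : ℝ) (hβ : 0 ≤ β) (hM : 0 ≤ M₀)
    (hd : Differentiable ℝ f)
    (hH : ∀ u v, ‖fderiv ℝ f u - fderiv ℝ f v‖ ≤ M₀ * ‖u - v‖ ^ β)
    (z w : Fin n → ℝ) :
    |f w - f z - fderiv ℝ f z (w - z)| ≤ (M₀ * ‖w - z‖ ^ β) * ‖w - z‖ := by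
  set L := fderiv ℝ f z with hL
  have hfd : ∀ u, fderiv ℝ (fun v => f v - L v) u = fderiv ℝ f u - L := by
    intro u
    rw [fderiv_fun_sub (hd u) L.differentiableAt]
    simp [ContinuousLinearMap.fderiv]
  have key := Convex.norm_image_sub_le_of_norm_fderiv_le
    (f := fun v => f v - L v) (s := segment ℝ z w) (C := M₀ * ‖w - z‖ ^ β)
    (fun u _ => (hd u).sub L.differentiableAt)
    (fun u hu => by
      rw [hfd u]
      exact (hH u z).trans (mul_le_mul_of_nonneg_left
        (Real.rpow_le_rpow (norm_nonneg _) (mem_segment_norm_sub_le hu) hβ) hM))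
    (convex_segment z w) (left_mem_segment ℝ z w) (right_mem_segment ℝ z w)
  have h2 : f w - L w - (f z - L z) = f w - f z - L (w - z) := by
    rw [map_sub]; ring
  rw [h2] at key
  simpa [Real.norm_eq_abs] using key

lemma prod_rpow_le_rpow {w a b e : ℝ} (hw0 : 0 ≤ w) (hw1 : w ≤ 1)
    (ha : 0 < a) (hb : 0 < b) (he : 0 < e) (hab : e ≤ a + b) :
    w ^ a * w ^ b ≤ w ^ e := by
  rcases eq_or_lt_of_le hw0 with h0 | h0
  · rw [← h0, Real.zero_rpow ha.ne', Real.zero_rpow he.ne', zero_mul]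
  · rw [← Real.rpow_add h0]
    exact Real.rpow_le_rpow_of_exponent_ge h0 hw1 hab

lemma prod3_rpow_le_rpow {w a b c e : ℝ} (hw0 : 0 ≤ w) (hw1 : w ≤ 1)
    (ha : 0 < a) (hb : 0 < b) (hc : 0 < c) (he : 0 < e) (habc : e ≤ a + b + c) :
    w ^ a * w ^ b * w ^ c ≤ w ^ e := by
  calc w ^ a * w ^ b * w ^ c ≤ w ^ (a + b) * w ^ c := by
        rcases eq_or_lt_of_le hw0 with h0 | h0
        · rw [← h0, Real.zero_rpow ha.ne', Real.zero_rpow (by positivity : a + b ≠ 0)]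
          simp
        · rw [← Real.rpow_add h0]
    _ ≤ w ^ e := prod_rpow_le_rpow hw0 hw1 (by linarith) hc he (by linarith)

noncomputable def gg {n d : ℕ} (f : Fin n → Fin d → (Fin n → ℝ) → ℝ) (i : Fin n) (r j : Fin d)
    (z : Fin n → ℝ) : ℝ :=
  ∑ h, f h r z * fderiv ℝ (f i j) z (Pi.single h 1)

noncomputable def JJ {n d : ℕ} (x : ℕ → Fin d → ℝ) (A : Fin d → Fin d → ℕ → ℕ → ℝ)
    (f : Fin n → Fin d → (Fin n → ℝ) → ℝ) (y : ℕ → Fin n → ℝ) (k l : ℕ) (i : Fin n) : ℝ :=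
  y l i - y k i - (∑ j, f i j (y k) * (x l j - x k j)) - ∑ r, ∑ j, gg f i r j (y k) * A r j k l

lemma gg_bound {n d : ℕ} (f : Fin n → Fin d → (Fin n → ℝ) → ℝ) (M₀ : ℝ) (hM : 0 ≤ M₀)
    (hfb : ∀ i j z, |f i j z| ≤ M₀) (hfd' : ∀ i j z, ‖fderiv ℝ (f i j) z‖ ≤ M₀)
    (i : Fin n) (r j : Fin d) (z : Fin n → ℝ) :
    |gg f i r j z| ≤ (n : ℝ) * M₀ ^ 2 := by
  refine abs_sum_le _ _ (fun h => ?_)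
  rw [abs_mul]
  calc |f h r z| * |fderiv ℝ (f i j) z (Pi.single h 1)| ≤ M₀ * M₀ :=
        mul_le_mul (hfb h r z) (clm_single_le _ (hfd' i j z) h) (abs_nonneg _) hM
    _ = M₀ ^ 2 := (sq M₀).symm

lemma gg_diff {n d : ℕ} (f : Fin n → Fin d → (Fin n → ℝ) → ℝ) (M₀ β : ℝ) (hM : 0 ≤ M₀)
    (hfb : ∀ i j z, |f i j z| ≤ M₀)
    (hfdiff : ∀ i j, Differentiable ℝ (f i j))
    (hfd' : ∀ i j z, ‖fderiv ℝ (f i j) z‖ ≤ M₀)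
    (hH : ∀ i j u v, ‖fderiv ℝ (f i j) u - fderiv ℝ (f i j) v‖ ≤ M₀ * ‖u - v‖ ^ β)
    (i : Fin n) (r j : Fin d) (u v : Fin n → ℝ) :
    |gg f i r j u - gg f i r j v| ≤ (n : ℝ) * (M₀ ^ 2 * (‖u - v‖ + ‖u - v‖ ^ β)) := by
  rw [gg, gg, ← Finset.sum_sub_distrib]
  refine abs_sum_le _ _ (fun h => ?_)
  have hkey : f h r u * fderiv ℝ (f i j) u (Pi.single h 1)
      - f h r v * fderiv ℝ (f i j) v (Pi.single h 1)
      = (f h r u - f h r v) * fderiv ℝ (f i j) u (Pi.single h 1)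
        + f h r v * ((fderiv ℝ (f i j) u - fderiv ℝ (f i j) v) (Pi.single h 1)) := by
    rw [ContinuousLinearMap.sub_apply]; ring
  rw [hkey]
  have h1 : |(f h r u - f h r v) * fderiv ℝ (f i j) u (Pi.single h 1)|
      ≤ (M₀ * ‖u - v‖) * M₀ := by
    rw [abs_mul]
    exact mul_le_mul (lip_aux _ _ (hfdiff h r) (fun z => hfd' h r z) u v)
      (clm_single_le _ (hfd' i j u) h) (abs_nonneg _) (by positivity)
  have h2 : |f h r v * ((fderiv ℝ (f i j) u - fderiv ℝ (f i j) v) (Pi.single h 1))|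
      ≤ M₀ * (M₀ * ‖u - v‖ ^ β) := by
    rw [abs_mul]
    exact mul_le_mul (hfb h r v) (clm_single_le _ (hH i j u v) h) (abs_nonneg _) hM
  calc |(f h r u - f h r v) * fderiv ℝ (f i j) u (Pi.single h 1)
        + f h r v * ((fderiv ℝ (f i j) u - fderiv ℝ (f i j) v) (Pi.single h 1))|
      ≤ |(f h r u - f h r v) * fderiv ℝ (f i j) u (Pi.single h 1)|
        + |f h r v * ((fderiv ℝ (f i j) u - fderiv ℝ (f i j) v) (Pi.single h 1))| := abs_add_le _ _
    _ ≤ (M₀ * ‖u - v‖) * M₀ + M₀ * (M₀ * ‖u - v‖ ^ β) := add_le_add h1 h2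
    _ = M₀ ^ 2 * (‖u - v‖ + ‖u - v‖ ^ β) := by ring

lemma chen_identity {n d : ℕ} (x : ℕ → Fin d → ℝ) (A : Fin d → Fin d → ℕ → ℕ → ℝ)
    (f : Fin n → Fin d → (Fin n → ℝ) → ℝ) (y : ℕ → Fin n → ℝ) (k l m : ℕ) (i : Fin n)
    (vv : Fin n → ℝ)
    (hA : ∀ r j, A r j k m = A r j k l + A r j l m + (x l r - x k r) * (x m j - x l j))
    (hvv : ∀ h, y l h - y k h = vv h + ∑ j', f h j' (y k) * (x l j' - x k j')) :
    JJ x A f y k m i - JJ x A f y k l i - JJ x A f y l m i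
      = (∑ j, (f i j (y l) - f i j (y k) - fderiv ℝ (f i j) (y k) (y l - y k)) * (x m j - x l j))
      + (∑ j, fderiv ℝ (f i j) (y k) vv * (x m j - x l j))
      + ∑ r, ∑ j, (gg f i r j (y l) - gg f i r j (y k)) * A r j l m := by
  have hyd : y l - y k = vv + fun h => ∑ j', f h j' (y k) * (x l j' - x k j') := by
    funext h
    simpa using hvv h
  have hLj : ∀ j : Fin d, fderiv ℝ (f i j) (y k) (y l - y k)
      = fderiv ℝ (f i j) (y k) vv + ∑ r, gg f i r j (y k) * (x l r - x k r) := by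
    intro j
    rw [hyd, map_add]
    congr 1
    calc (fderiv ℝ (f i j) (y k)) (fun h => ∑ j', f h j' (y k) * (x l j' - x k j'))
        = ∑ h, (∑ j', f h j' (y k) * (x l j' - x k j'))
            * (fderiv ℝ (f i j) (y k)) (Pi.single h 1) := clm_apply_eq_sum _ _
      _ = ∑ h, ∑ j', (f h j' (y k) * (x l j' - x k j'))
            * (fderiv ℝ (f i j) (y k)) (Pi.single h 1) :=
          Finset.sum_congr rfl fun h _ => Finset.sum_mul _ _ _
      _ = ∑ j', ∑ h, (f h j' (y k) * (x l j' - x k j'))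
            * (fderiv ℝ (f i j) (y k)) (Pi.single h 1) := Finset.sum_comm
      _ = ∑ r, gg f i r j (y k) * (x l r - x k r) := by
          refine Finset.sum_congr rfl fun r _ => ?_
          rw [gg, Finset.sum_mul]
          exact Finset.sum_congr rfl fun h _ => by ring
  have hS1 : (∑ j, f i j (y k) * (x m j - x k j))
      = (∑ j, f i j (y k) * (x m j - x l j)) + (∑ j, f i j (y k) * (x l j - x k j)) := by
    rw [← Finset.sum_add_distrib]
    exact Finset.sum_congr rfl fun j _ => by ring
  have hS2 : (∑ r, ∑ j, gg f i r j (y k) * A r j k m)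
      = (∑ r, ∑ j, gg f i r j (y k) * A r j k l) + (∑ r, ∑ j, gg f i r j (y k) * A r j l m)
        + (∑ j, (∑ r, gg f i r j (y k) * (x l r - x k r)) * (x m j - x l j)) := by
    have e1 : (∑ r, ∑ j, gg f i r j (y k) * A r j k m)
        = ∑ r, ∑ j, (gg f i r j (y k) * A r j k l + gg f i r j (y k) * A r j l m
          + gg f i r j (y k) * ((x l r - x k r) * (x m j - x l j))) := by
      refine Finset.sum_congr rfl fun r _ => Finset.sum_congr rfl fun j _ => ?_
      rw [hA r j]; ring
    have e2 : (∑ r, ∑ j, gg f i r j (y k) * ((x l r - x k r) * (x m j - x l j)))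
        = ∑ j, (∑ r, gg f i r j (y k) * (x l r - x k r)) * (x m j - x l j) := by
      rw [Finset.sum_comm]
      refine Finset.sum_congr rfl fun j _ => ?_
      rw [Finset.sum_mul]
      exact Finset.sum_congr rfl fun r _ => by ring
    rw [e1]
    simp only [Finset.sum_add_distrib]
    linear_combination e2
  have hS3 : (∑ j, (f i j (y l) - f i j (y k) - fderiv ℝ (f i j) (y k) (y l - y k)) * (x m j - x l j))
      + (∑ j, fderiv ℝ (f i j) (y k) vv * (x m j - x l j))
      + (∑ j, (∑ r, gg f i r j (y k) * (x l r - x k r)) * (x m j - x l j))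
      = (∑ j, f i j (y l) * (x m j - x l j)) - (∑ j, f i j (y k) * (x m j - x l j)) := by
    rw [← Finset.sum_add_distrib, ← Finset.sum_add_distrib, ← Finset.sum_sub_distrib]
    refine Finset.sum_congr rfl fun j _ => ?_
    rw [hLj j]; ring
  have hS4 : (∑ r, ∑ j, (gg f i r j (y l) - gg f i r j (y k)) * A r j l m)
      = (∑ r, ∑ j, gg f i r j (y l) * A r j l m)
        - (∑ r, ∑ j, gg f i r j (y k) * A r j l m) := by
    rw [← Finset.sum_sub_distrib]
    refine Finset.sum_congr rfl fun r _ => ?_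
    rw [← Finset.sum_sub_distrib]
    exact Finset.sum_congr rfl fun j _ => by ring
  simp only [JJ]
  linear_combination -hS1 - hS2 - hS3 - hS4

end DavieAux

set_option maxHeartbeats 2000000 in
/-- Lemma 2(a) of the paper: a priori estimates for the Milstein-type scheme driven by
a discrete rough path of finite `p`-variation with second-level components `A`
satisfying Chen's relation, `2 ≤ p < γ ≤ 3`. -/
theorem milstein_scheme_a_priori_estimate (n d : ℕ) (γ p Ω M₀ : ℝ)
    (hp : 2 ≤ p) (hpγ : p < γ) (hγ : γ ≤ 3) (hΩ : 0 ≤ Ω) (hM₀ : 0 < M₀) :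
    ∃ C > 0, ∃ M > 0,
      ∀ (K : ℕ) (x : ℕ → Fin d → ℝ) (A : Fin d → Fin d → ℕ → ℕ → ℝ)
        (ω : ℕ → ℕ → ℝ) (f : Fin n → Fin d → (Fin n → ℝ) → ℝ)
        (y : ℕ → Fin n → ℝ),
        (∀ k l, k ≤ l → l ≤ K → 0 ≤ ω k l) →
        (∀ k l m, k ≤ l → l ≤ m → m ≤ K → ω k l + ω l m ≤ ω k m) →
        ω 0 K ≤ Ω →
        (∀ r j k l m, k ≤ l → l ≤ m → m ≤ K →
          A r j k m = A r j k l + A r j l m + (x l r - x k r) * (x m j - x l j)) →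
        (∀ k l, k ≤ l → l ≤ K → ∀ j, |x l j - x k j| ^ p ≤ ω k l) →
        (∀ k l, k ≤ l → l ≤ K → ∀ r j, |A r j k l| ≤ ω k l ^ (2 / p)) →
        (∀ i j y', |f i j y'| ≤ M₀) →
        (∀ i j, Differentiable ℝ (f i j)) →
        (∀ i j y', ‖fderiv ℝ (f i j) y'‖ ≤ M₀) →
        (∀ i j y' z', ‖fderiv ℝ (f i j) y' - fderiv ℝ (f i j) z'‖
          ≤ M₀ * ‖y' - z'‖ ^ (γ - 2)) →
        (∀ k i, y (k + 1) i = y k i + (∑ j, f i j (y k) * (x (k + 1) j - x k j))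
          + ∑ r, ∑ j, (∑ h, f h r (y k) * fderiv ℝ (f i j) (y k) (Pi.single h 1))
              * A r j k (k + 1)) →
        ∀ k l, k ≤ l → l ≤ K →
          (∀ i, |y l i - y k i - (∑ j, f i j (y k) * (x l j - x k j))
              - ∑ r, ∑ j, (∑ h, f h r (y k) * fderiv ℝ (f i j) (y k) (Pi.single h 1))
                  * A r j k l|
            ≤ M * ω k l ^ (γ / p)) ∧
          (∀ i, |y l i - y k i| ≤ C * ω k l ^ (1 / p)) := by
  classical
  have hp0 : (0:ℝ) < p := by linarith
  have hγ2 : 2 < γ := by linarith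
  have hβ0 : (0:ℝ) < γ - 2 := by linarith
  have hβ1 : γ - 2 ≤ 1 := by linarith
  set θ : ℝ := γ / p with hθdef
  have hθ1 : 1 < θ := (one_lt_div hp0).mpr hpγ
  have hθ0 : (0:ℝ) < θ := by linarith
  have h1p0 : (0:ℝ) < 1/p := by positivity
  have h2p0 : (0:ℝ) < 2/p := by positivity
  have hθ3p : θ ≤ 2/p + 1/p := by
    have h3p : (2:ℝ)/p + 1/p = 3/p := by ring
    rw [hθdef, h3p]
    gcongr
  have hθ3p' : θ ≤ 1/p + 2/p := by
    have h0 : (1:ℝ)/p + 2/p = 2/p + 1/p := by ring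
    rw [h0]; exact hθ3p
  have hθE : θ = (1/p)*(γ-2) + 1/p + 1/p := by rw [hθdef]; ring
  have hθE2 : θ = (1/p)*(γ-2) + 2/p := by rw [hθdef]; ring
  have hθE3 : (γ-1)/p + 1/p = θ := by rw [hθdef]; ring
  -- constants
  obtain ⟨ε, hεdef⟩ : ∃ c : ℝ, c = 1 - (2:ℝ) ^ ((1:ℝ) - θ) := ⟨_, rfl⟩
  have h2θlt : (2:ℝ) ^ ((1:ℝ) - θ) < 1 :=
    Real.rpow_lt_one_of_one_lt_of_neg (by norm_num) (by linarith)
  have h2θpos : (0:ℝ) < (2:ℝ) ^ ((1:ℝ) - θ) := Real.rpow_pos_of_pos (by norm_num) _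
  have hε0 : 0 < ε := by rw [hεdef]; linarith
  have hε1 : ε ≤ 1 := by rw [hεdef]; linarith
  obtain ⟨C₀, hC₀def⟩ : ∃ c : ℝ, c = 1 + d * M₀ + d^2 * n * M₀^2 := ⟨_, rfl⟩
  have hC₀1 : 1 ≤ C₀ := by
    have h0 : (0:ℝ) ≤ (d:ℝ) * M₀ + (d:ℝ)^2 * n * M₀^2 := by positivity
    rw [hC₀def]; linarith
  have hC₀0 : (0:ℝ) ≤ C₀ := by linarith
  obtain ⟨b, hbdef⟩ : ∃ c : ℝ, c = (d:ℝ) * M₀ := ⟨_, rfl⟩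
  have hb0 : (0:ℝ) ≤ b := by rw [hbdef]; positivity
  obtain ⟨a', ha'def⟩ : ∃ c : ℝ,
      c = d * M₀ * C₀^2 + d^3 * n * M₀^3 + 2 * d^2 * n * M₀^2 * C₀ := ⟨_, rfl⟩
  have ha'0 : (0:ℝ) ≤ a' := by rw [ha'def]; positivity
  obtain ⟨M₁, hM₁def⟩ : ∃ c : ℝ, c = 4 * (a' + 1) / ε := ⟨_, rfl⟩
  have hM₁0 : 0 < M₁ := by rw [hM₁def]; positivity
  obtain ⟨L, hLdef⟩ : ∃ c : ℝ,
      c = min 1 (min ((ε / (4 * (b+1))) ^ p) (M₁ ^ (-(p / (γ-1))))) := ⟨_, rfl⟩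
  have hεb0 : 0 < ε / (4 * (b+1)) := by positivity
  have hL0 : 0 < L := by
    rw [hLdef]
    exact lt_min one_pos (lt_min (Real.rpow_pos_of_pos hεb0 _) (Real.rpow_pos_of_pos hM₁0 _))
  have hL1 : L ≤ 1 := by rw [hLdef]; exact min_le_left _ _
  have hLa : L ^ (1/p) ≤ ε / (4 * (b+1)) := by
    have h1 : L ≤ (ε / (4 * (b+1))) ^ p := by
      rw [hLdef]; exact le_trans (min_le_right _ _) (min_le_left _ _)
    have h2 : L ^ (1/p) ≤ ((ε / (4*(b+1))) ^ p) ^ (1/p) :=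
      Real.rpow_le_rpow hL0.le h1 (by positivity)
    rwa [← Real.rpow_mul hεb0.le, mul_one_div, div_self hp0.ne', Real.rpow_one] at h2
  have hLbM : M₁ * L ^ ((γ-1)/p) ≤ 1 := by
    have h1 : L ≤ M₁ ^ (-(p / (γ-1))) := by
      rw [hLdef]; exact le_trans (min_le_right _ _) (min_le_right _ _)
    have hγ1pos : (0:ℝ) < γ - 1 := by linarith
    have h2 : L ^ ((γ-1)/p) ≤ (M₁ ^ (-(p/(γ-1)))) ^ ((γ-1)/p) :=
      Real.rpow_le_rpow hL0.le h1 (div_nonneg hγ1pos.le hp0.le)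
    rw [← Real.rpow_mul hM₁0.le] at h2
    have e : p/(γ-1) * ((γ-1)/p) = 1 := by
      rw [div_mul_div_comm, mul_comm (γ-1) p]
      exact div_self (ne_of_gt (mul_pos hp0 hγ1pos))
    have h3 : -(p/(γ-1)) * ((γ-1)/p) = -1 := by
      calc -(p/(γ-1)) * ((γ-1)/p) = -(p/(γ-1) * ((γ-1)/p)) := by ring
        _ = -1 := by rw [e]
    rw [h3, Real.rpow_neg_one] at h2
    calc M₁ * L ^ ((γ-1)/p) ≤ M₁ * M₁⁻¹ := mul_le_mul_of_nonneg_left h2 hM₁0.le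
      _ = 1 := mul_inv_cancel₀ hM₁0.ne'
  obtain ⟨cδ, hcδdef⟩ : ∃ c : ℝ, c = a' + b * M₁ * L ^ (1/p) := ⟨_, rfl⟩
  have hLp0 : (0:ℝ) ≤ L ^ (1/p) := Real.rpow_nonneg hL0.le _
  have hcδ0 : (0:ℝ) ≤ cδ := by
    rw [hcδdef]
    have h0 : (0:ℝ) ≤ b * M₁ * L ^ (1/p) := by positivity
    linarith
  have hεM₁ : ε * M₁ = 4*(a'+1) := by
    rw [hM₁def, mul_comm]
    exact div_mul_cancel₀ _ hε0.ne'
  have hKey : M₁ * (2:ℝ)^((1:ℝ)-θ) + 2*cδ ≤ M₁ := by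
    have h2θ : (2:ℝ)^((1:ℝ)-θ) = 1 - ε := by rw [hεdef]; ring
    have hbb : (0:ℝ) < b + 1 := by linarith
    have h1 : b * M₁ * L^(1/p) ≤ b * M₁ * (ε/(4*(b+1))) :=
      mul_le_mul_of_nonneg_left hLa (by positivity)
    have h2 : b * M₁ * (ε/(4*(b+1))) ≤ a' + 1 := by
      have e1 : b * M₁ * (ε / (4*(b+1))) = (ε*M₁) * (b/(4*(b+1))) := by ring
      rw [e1, hεM₁]
      have e2 : 4*(a'+1) * (b/(4*(b+1))) = (a'+1) * (b/(b+1)) := by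
        field_simp
      rw [e2]
      have hb1 : b/(b+1) ≤ 1 := by rw [div_le_one hbb]; linarith
      exact mul_le_of_le_one_right (by linarith) hb1
    have h12 := le_trans h1 h2
    rw [h2θ, hcδdef]
    linarith [hεM₁, h12]
  obtain ⟨C₂, hC₂def⟩ : ∃ c : ℝ, c = d*M₀ + d^2*n*M₀^2*(1 + Ω^(1/p)) := ⟨_, rfl⟩
  have hC₂0 : (0:ℝ) ≤ C₂ := by rw [hC₂def]; positivity
  obtain ⟨C₃, hC₃def⟩ : ∃ c : ℝ, c = C₀ + C₂ := ⟨_, rfl⟩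
  have hC₃1 : 1 ≤ C₃ := by rw [hC₃def]; linarith
  have hC₃0 : (0:ℝ) ≤ C₃ := by linarith
  obtain ⟨Cc, hCcdef⟩ : ∃ c : ℝ, c = C₃ * (1 + 2*Ω/L) := ⟨_, rfl⟩
  have hfac0 : (1:ℝ) ≤ 1 + 2*Ω/L := by
    have h0 : (0:ℝ) ≤ 2*Ω/L := div_nonneg (by linarith) hL0.le
    linarith
  have hCc0 : 0 < Cc := by
    rw [hCcdef]
    exact mul_pos (by linarith) (by linarith)
  obtain ⟨Mc, hMcdef⟩ : ∃ c : ℝ, c = max M₁ ((Cc + C₂) * L ^ ((1-γ)/p)) := ⟨_, rfl⟩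
  have hMc0 : 0 < Mc := by rw [hMcdef]; exact lt_of_lt_of_le hM₁0 (le_max_left _ _)
  refine ⟨Cc, hCc0, Mc, hMc0, ?_⟩
  intro K x A ω f y hω0 hsuper hΩK hChen hxp hAb hfb hfdiff hfd' hfH hsch
  -- basic facts about ω, A
  have hmono : ∀ k' k l l', k' ≤ k → k ≤ l → l ≤ l' → l' ≤ K → ω k l ≤ ω k' l' := by
    intro k' k l l' h1 h2 h3 h4
    have ha := hsuper k' k l h1 h2 (le_trans h3 h4)
    have hb := hsuper k' l l' (le_trans h1 h2) h3 h4
    have hc := hω0 k' k h1 (le_trans h2 (le_trans h3 h4))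
    have hd := hω0 l l' h3 h4
    linarith
  have hωΩ : ∀ k l, k ≤ l → l ≤ K → ω k l ≤ Ω := fun k l h1 h2 =>
    le_trans (hmono 0 k l K (Nat.zero_le _) h1 h2 le_rfl) hΩK
  have hωkk : ∀ k, k ≤ K → ω k k = 0 := by
    intro k hk
    have h1 := hsuper k k k le_rfl le_rfl hk
    have h2 := hω0 k k le_rfl hk
    linarith
  have hAkk : ∀ k, k ≤ K → ∀ r j, A r j k k = 0 := by
    intro k hk r j
    have h := hChen r j k k k le_rfl le_rfl hk
    have h2 : (x k r - x k r) * (x k j - x k j) = 0 := by ring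
    rw [h2] at h
    linarith
  have hJkk : ∀ k, k ≤ K → ∀ i, DavieAux.JJ x A f y k k i = 0 := by
    intro k hk i
    simp [DavieAux.JJ, hAkk k hk]
  have hJstep : ∀ k i, DavieAux.JJ x A f y k (k+1) i = 0 := by
    intro k i
    have h := hsch k i
    simp only [DavieAux.JJ, DavieAux.gg]
    linear_combination h
  have hxb : ∀ k l, k ≤ l → l ≤ K → ∀ j, |x l j - x k j| ≤ ω k l ^ (1/p) := by
    intro k l h1 h2 j
    have h := hxp k l h1 h2 j
    have h3 : (|x l j - x k j| ^ p) ^ (1/p) ≤ ω k l ^ (1/p) :=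
      Real.rpow_le_rpow (Real.rpow_nonneg (abs_nonneg _) _) h (by positivity)
    rwa [← Real.rpow_mul (abs_nonneg _), mul_one_div, div_self hp0.ne', Real.rpow_one] at h3
  have hS1b : ∀ k l, k ≤ l → l ≤ K → ∀ i,
      |∑ j, f i j (y k) * (x l j - x k j)| ≤ (d:ℝ) * (M₀ * ω k l ^ (1/p)) := by
    intro k l h1 h2 i
    refine DavieAux.abs_sum_le _ _ (fun j => ?_)
    rw [abs_mul]
    exact mul_le_mul (hfb i j (y k)) (hxb k l h1 h2 j) (abs_nonneg _) hM₀.le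
  have hS2b : ∀ k l, k ≤ l → l ≤ K → ∀ i,
      |∑ r, ∑ j, DavieAux.gg f i r j (y k) * A r j k l|
        ≤ (d:ℝ) * ((d:ℝ) * ((n:ℝ) * M₀^2 * ω k l ^ (2/p))) := by
    intro k l h1 h2 i
    refine DavieAux.abs_sum_le _ _ (fun r => DavieAux.abs_sum_le _ _ (fun j => ?_))
    rw [abs_mul]
    exact mul_le_mul (DavieAux.gg_bound f M₀ hM₀.le hfb hfd' i r j (y k))
      (hAb k l h1 h2 r j) (abs_nonneg _) (by positivity)
  have h2pa : ∀ w, 0 ≤ w → w ≤ Ω → w ^ (2/p) ≤ Ω ^ (1/p) * w ^ (1/p) := by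
    intro w hw hwΩ
    have he : (2:ℝ)/p = 1/p + 1/p := by ring
    rw [he, Real.rpow_add' hw (by positivity)]
    exact mul_le_mul_of_nonneg_right (Real.rpow_le_rpow hw hwΩ (by positivity))
      (Real.rpow_nonneg hw _)
  -- single step bound for y
  have hYstep : ∀ k, k + 1 ≤ K → ∀ i, |y (k+1) i - y k i| ≤ C₂ * ω k (k+1) ^ (1/p) := by
    intro k hk i
    have h := hsch k i
    have heq : y (k+1) i - y k i = (∑ j, f i j (y k) * (x (k+1) j - x k j))
        + ∑ r, ∑ j, DavieAux.gg f i r j (y k) * A r j k (k+1) := by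
      rw [h]; simp only [DavieAux.gg]; ring
    rw [heq]
    have t1 := hS1b k (k+1) (Nat.le_succ k) hk i
    have t2 := hS2b k (k+1) (Nat.le_succ k) hk i
    have hw0 := hω0 k (k+1) (Nat.le_succ k) hk
    have h2 := h2pa (ω k (k+1)) hw0 (hωΩ k (k+1) (Nat.le_succ k) hk)
    have t3 : (d:ℝ) * ((d:ℝ) * ((n:ℝ)*M₀^2*ω k (k+1)^(2/p)))
        ≤ (d:ℝ)^2*(n:ℝ)*M₀^2*(Ω^(1/p)*ω k (k+1)^(1/p)) := by
      have e0 : (d:ℝ) * ((d:ℝ) * ((n:ℝ)*M₀^2*ω k (k+1)^(2/p)))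
          = (d:ℝ)^2*(n:ℝ)*M₀^2*(ω k (k+1)^(2/p)) := by ring
      rw [e0]
      exact mul_le_mul_of_nonneg_left h2 (by positivity)
    have hrn : (0:ℝ) ≤ ω k (k+1)^(1/p) := Real.rpow_nonneg hw0 _
    have e : C₂ * ω k (k+1)^(1/p) = (d:ℝ)*(M₀*ω k (k+1)^(1/p))
        + (d:ℝ)^2*(n:ℝ)*M₀^2*(Ω^(1/p)*ω k (k+1)^(1/p)) + (d:ℝ)^2*(n:ℝ)*M₀^2*ω k (k+1)^(1/p) := by
      rw [hC₂def]; ring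
    have htr := abs_add_le (∑ j, f i j (y k) * (x (k+1) j - x k j))
      (∑ r, ∑ j, DavieAux.gg f i r j (y k) * A r j k (k+1))
    have hnn : (0:ℝ) ≤ (d:ℝ)^2*(n:ℝ)*M₀^2*ω k (k+1)^(1/p) := by positivity
    linarith
  -- small-interval y bound given small-interval J bounds
  have hSYof : ∀ k l, k ≤ l → l ≤ K → ω k l ≤ L →
      (∀ h, |DavieAux.JJ x A f y k l h| ≤ M₁ * ω k l ^ θ) →
      ∀ i, |y l i - y k i| ≤ C₀ * ω k l ^ (1/p) := by
    intro k l h1 h2 hωL hJ i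
    have hw0 := hω0 k l h1 h2
    have hw1 : ω k l ≤ 1 := le_trans hωL hL1
    have heq : y l i - y k i = DavieAux.JJ x A f y k l i
        + (∑ j, f i j (y k) * (x l j - x k j))
        + ∑ r, ∑ j, DavieAux.gg f i r j (y k) * A r j k l := by
      simp only [DavieAux.JJ]; ring
    rw [heq]
    have t0 := hJ i
    have t1 := hS1b k l h1 h2 i
    have t2 := hS2b k l h1 h2 i
    have e1 : ω k l ^ θ = ω k l ^ ((γ-1)/p) * ω k l ^ (1/p) := by
      rw [← hθE3, Real.rpow_add' hw0 (by rw [hθE3]; exact hθ0.ne')]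
    have e2 : M₁ * ω k l ^ θ ≤ ω k l ^ (1/p) := by
      rw [e1]
      have s1 : ω k l ^ ((γ-1)/p) ≤ L ^ ((γ-1)/p) :=
        Real.rpow_le_rpow hw0 hωL (div_nonneg (by linarith) hp0.le)
      calc M₁ * (ω k l ^ ((γ-1)/p) * ω k l ^ (1/p))
          = (M₁ * ω k l ^ ((γ-1)/p)) * ω k l ^ (1/p) := by ring
        _ ≤ (M₁ * L ^ ((γ-1)/p)) * ω k l ^ (1/p) := by
            apply mul_le_mul_of_nonneg_right _ (Real.rpow_nonneg hw0 _)
            exact mul_le_mul_of_nonneg_left s1 hM₁0.le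
        _ ≤ 1 * ω k l ^ (1/p) := mul_le_mul_of_nonneg_right hLbM (Real.rpow_nonneg hw0 _)
        _ = ω k l ^ (1/p) := one_mul _
    have e3 : ω k l ^ (2/p) ≤ ω k l ^ (1/p) := by
      have he : (2:ℝ)/p = 1/p + 1/p := by ring
      rw [he, Real.rpow_add' hw0 (by positivity)]
      calc ω k l ^ (1/p) * ω k l ^ (1/p) ≤ 1 * ω k l ^ (1/p) :=
            mul_le_mul_of_nonneg_right (Real.rpow_le_one hw0 hw1 (by positivity))
              (Real.rpow_nonneg hw0 _)
        _ = ω k l ^ (1/p) := one_mul _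
    have t4 : (d:ℝ)*((d:ℝ)*((n:ℝ)*M₀^2*ω k l^(2/p))) ≤ (d:ℝ)^2*(n:ℝ)*M₀^2*ω k l^(1/p) := by
      have e0 : (d:ℝ)*((d:ℝ)*((n:ℝ)*M₀^2*ω k l^(2/p))) = (d:ℝ)^2*(n:ℝ)*M₀^2*(ω k l^(2/p)) := by ring
      rw [e0]
      exact mul_le_mul_of_nonneg_left e3 (by positivity)
    have htr := DavieAux.abs_add₃ (DavieAux.JJ x A f y k l i)
      (∑ j, f i j (y k) * (x l j - x k j))
      (∑ r, ∑ j, DavieAux.gg f i r j (y k) * A r j k l)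
    have e5 : C₀ * ω k l^(1/p) = ω k l^(1/p) + (d:ℝ)*(M₀*ω k l^(1/p))
        + (d:ℝ)^2*(n:ℝ)*M₀^2*ω k l^(1/p) := by rw [hC₀def]; ring
    linarith
  -- the coboundary (delta) bound
  have hDB : ∀ k l m, k ≤ l → l ≤ m → m ≤ K → ω k m ≤ L →
      (∀ h, |DavieAux.JJ x A f y k l h| ≤ M₁ * ω k l ^ θ) →
      ∀ i, |DavieAux.JJ x A f y k m i - DavieAux.JJ x A f y k l i - DavieAux.JJ x A f y l m i|
        ≤ cδ * ω k m ^ θ := by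
    intro k l m hkl hlm hmK hωL hJ i
    have hkK : k ≤ K := le_trans (le_trans hkl hlm) hmK
    have hlK : l ≤ K := le_trans hlm hmK
    have hw0 : 0 ≤ ω k m := hω0 k m (le_trans hkl hlm) hmK
    have hw1 : ω k m ≤ 1 := le_trans hωL hL1
    have hu0 : 0 ≤ ω k l := hω0 k l hkl hlK
    have huw : ω k l ≤ ω k m := hmono k k l m le_rfl hkl hlm hmK
    have hv0 : 0 ≤ ω l m := hω0 l m hlm hmK
    have hvw : ω l m ≤ ω k m := hmono k l m m hkl hlm le_rfl hmK
    have hycomp := hSYof k l hkl hlK (le_trans huw hωL) hJ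
    have hynorm : ‖y l - y k‖ ≤ C₀ * ω k l ^ (1/p) := by
      rw [pi_norm_le_iff_of_nonneg (by positivity)]
      intro i'
      rw [Pi.sub_apply, Real.norm_eq_abs]
      exact hycomp i'
    have hynorm' : ‖y l - y k‖ ≤ C₀ * ω k m ^ (1/p) :=
      le_trans hynorm (mul_le_mul_of_nonneg_left
        (Real.rpow_le_rpow hu0 huw (by positivity)) hC₀0)
    set vv : Fin n → ℝ := fun h' => DavieAux.JJ x A f y k l h'
      + ∑ r, ∑ j', DavieAux.gg f h' r j' (y k) * A r j' k l with hvvdef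
    have hchen := DavieAux.chen_identity x A f y k l m i vv
      (fun r j => hChen r j k l m hkl hlm hmK)
      (fun h' => by rw [hvvdef]; simp only [DavieAux.JJ]; ring)
    rw [hchen]
    have hvvb : ‖vv‖ ≤ M₁ * ω k l ^ θ + (d:ℝ) * ((d:ℝ) * ((n:ℝ) * M₀^2 * ω k l ^ (2/p))) := by
      rw [pi_norm_le_iff_of_nonneg]
      · intro h'
        rw [Real.norm_eq_abs, hvvdef]
        calc |DavieAux.JJ x A f y k l h' + ∑ r, ∑ j', DavieAux.gg f h' r j' (y k) * A r j' k l|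
            ≤ |DavieAux.JJ x A f y k l h'| + |∑ r, ∑ j', DavieAux.gg f h' r j' (y k) * A r j' k l| :=
              abs_add_le _ _
          _ ≤ _ := add_le_add (hJ h') (hS2b k l hkl hlK h')
      · have r1 : (0:ℝ) ≤ M₁ * ω k l ^ θ := mul_nonneg hM₁0.le (Real.rpow_nonneg hu0 _)
        have r2 : (0:ℝ) ≤ (d:ℝ) * ((d:ℝ) * ((n:ℝ) * M₀^2 * ω k l ^ (2/p))) := by positivity
        linarith
    have hyβ : ‖y l - y k‖ ^ (γ-2) ≤ C₀ * ω k m ^ ((1/p)*(γ-2)) := by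
      calc ‖y l - y k‖ ^ (γ-2) ≤ (C₀ * ω k m ^ (1/p)) ^ (γ-2) :=
            Real.rpow_le_rpow (norm_nonneg _) hynorm' hβ0.le
        _ = C₀ ^ (γ-2) * (ω k m ^ (1/p)) ^ (γ-2) :=
            Real.mul_rpow hC₀0 (Real.rpow_nonneg hw0 _)
        _ ≤ C₀ ^ (1:ℝ) * (ω k m ^ (1/p)) ^ (γ-2) :=
            mul_le_mul_of_nonneg_right (Real.rpow_le_rpow_of_exponent_le hC₀1 hβ1)
              (Real.rpow_nonneg (Real.rpow_nonneg hw0 _) _)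
        _ = C₀ * ω k m ^ ((1/p)*(γ-2)) := by rw [Real.rpow_one, ← Real.rpow_mul hw0]
    -- term 1 : Taylor remainder term
    have hT1 : |∑ j, (f i j (y l) - f i j (y k) - fderiv ℝ (f i j) (y k) (y l - y k)) * (x m j - x l j)|
        ≤ ((d:ℝ) * (M₀ * C₀^2)) * ω k m ^ θ := by
      have hterm : ∀ j, |(f i j (y l) - f i j (y k) - fderiv ℝ (f i j) (y k) (y l - y k)) * (x m j - x l j)|
          ≤ (M₀ * C₀^2) * ω k m ^ θ := by
        intro j
        rw [abs_mul]
        have hE := DavieAux.taylor_aux (f i j) M₀ (γ-2) hβ0.le hM₀.le (hfdiff i j)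
          (fun u v => hfH i j u v) (y k) (y l)
        have hxm : |x m j - x l j| ≤ ω k m ^ (1/p) :=
          le_trans (hxb l m hlm hmK j) (Real.rpow_le_rpow hv0 hvw (by positivity))
        calc |f i j (y l) - f i j (y k) - fderiv ℝ (f i j) (y k) (y l - y k)| * |x m j - x l j|
            ≤ ((M₀ * ‖y l - y k‖ ^ (γ-2)) * ‖y l - y k‖) * (ω k m ^ (1/p)) :=
              mul_le_mul hE hxm (abs_nonneg _) (by positivity)
          _ ≤ ((M₀ * (C₀ * ω k m ^ ((1/p)*(γ-2)))) * (C₀ * ω k m ^ (1/p))) * ω k m ^ (1/p) := by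
              gcongr
          _ = (M₀ * C₀^2) * (ω k m ^ ((1/p)*(γ-2)) * ω k m ^ (1/p) * ω k m ^ (1/p)) := by ring
          _ ≤ (M₀ * C₀^2) * ω k m ^ θ := by
              apply mul_le_mul_of_nonneg_left _ (by positivity)
              exact DavieAux.prod3_rpow_le_rpow hw0 hw1 (mul_pos h1p0 hβ0) h1p0 h1p0 hθ0
                (le_of_eq hθE)
      calc |∑ j, (f i j (y l) - f i j (y k) - fderiv ℝ (f i j) (y k) (y l - y k)) * (x m j - x l j)|
          ≤ (d:ℝ) * ((M₀ * C₀^2) * ω k m ^ θ) := DavieAux.abs_sum_le _ _ hterm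
        _ = ((d:ℝ) * (M₀ * C₀^2)) * ω k m ^ θ := by ring
    -- term 2 : linear term
    have hT2 : |∑ j, fderiv ℝ (f i j) (y k) vv * (x m j - x l j)|
        ≤ ((d:ℝ) * (M₀ * M₁ * L^(1/p) + (d:ℝ)^2*(n:ℝ)*M₀^3)) * ω k m ^ θ := by
      have hterm : ∀ j, |fderiv ℝ (f i j) (y k) vv * (x m j - x l j)|
          ≤ (M₀ * M₁ * L^(1/p) + (d:ℝ)^2*(n:ℝ)*M₀^3) * ω k m ^ θ := by
        intro j
        rw [abs_mul]
        have h1 : |fderiv ℝ (f i j) (y k) vv|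
            ≤ M₀ * (M₁ * ω k l ^ θ + (d:ℝ) * ((d:ℝ) * ((n:ℝ)*M₀^2 * ω k l^(2/p)))) :=
          le_trans (DavieAux.clm_apply_le _ (hfd' i j (y k)) vv)
            (mul_le_mul_of_nonneg_left hvvb hM₀.le)
        have hxw : |x m j - x l j| ≤ ω k m ^(1/p) :=
          le_trans (hxb l m hlm hmK j) (Real.rpow_le_rpow hv0 hvw (by positivity))
        have hxL : |x m j - x l j| ≤ L^(1/p) :=
          le_trans (hxb l m hlm hmK j) (Real.rpow_le_rpow hv0 (le_trans hvw hωL) (by positivity))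
        have hθw : ω k l ^ θ ≤ ω k m ^ θ := Real.rpow_le_rpow hu0 huw hθ0.le
        have h2w : ω k l ^ (2/p) ≤ ω k m ^ (2/p) := Real.rpow_le_rpow hu0 huw (by positivity)
        calc |fderiv ℝ (f i j) (y k) vv| * |x m j - x l j|
            ≤ (M₀ * (M₁ * ω k l ^ θ + (d:ℝ) * ((d:ℝ) * ((n:ℝ)*M₀^2 * ω k l^(2/p))))) * |x m j - x l j| :=
              mul_le_mul_of_nonneg_right h1 (abs_nonneg _)
          _ = (M₀*M₁) * (ω k l ^ θ * |x m j - x l j|)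
              + ((d:ℝ)^2*(n:ℝ)*M₀^3) * (ω k l^(2/p) * |x m j - x l j|) := by ring
          _ ≤ (M₀*M₁) * (ω k m ^ θ * L^(1/p))
              + ((d:ℝ)^2*(n:ℝ)*M₀^3) * (ω k m ^(2/p) * ω k m ^(1/p)) := by
              apply add_le_add
              · apply mul_le_mul_of_nonneg_left _ (by positivity)
                exact mul_le_mul hθw hxL (abs_nonneg _) (Real.rpow_nonneg hw0 _)
              · apply mul_le_mul_of_nonneg_left _ (by positivity)
                exact mul_le_mul h2w hxw (abs_nonneg _) (Real.rpow_nonneg hw0 _)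
          _ ≤ (M₀*M₁) * (ω k m ^ θ * L^(1/p)) + ((d:ℝ)^2*(n:ℝ)*M₀^3) * ω k m ^ θ := by
              apply add_le_add_right
              apply mul_le_mul_of_nonneg_left _ (by positivity)
              exact DavieAux.prod_rpow_le_rpow hw0 hw1 h2p0 h1p0 hθ0 hθ3p
          _ = (M₀ * M₁ * L^(1/p) + (d:ℝ)^2*(n:ℝ)*M₀^3) * ω k m ^ θ := by ring
      calc |∑ j, fderiv ℝ (f i j) (y k) vv * (x m j - x l j)|
          ≤ (d:ℝ) * ((M₀ * M₁ * L^(1/p) + (d:ℝ)^2*(n:ℝ)*M₀^3) * ω k m ^ θ) :=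
            DavieAux.abs_sum_le _ _ hterm
        _ = ((d:ℝ) * (M₀ * M₁ * L^(1/p) + (d:ℝ)^2*(n:ℝ)*M₀^3)) * ω k m ^ θ := by ring
    -- term 3 : g difference term
    have hT3 : |∑ r, ∑ j, (DavieAux.gg f i r j (y l) - DavieAux.gg f i r j (y k)) * A r j l m|
        ≤ ((d:ℝ) * ((d:ℝ) * (2*(n:ℝ)*M₀^2*C₀))) * ω k m ^ θ := by
      have hterm : ∀ r j, |(DavieAux.gg f i r j (y l) - DavieAux.gg f i r j (y k)) * A r j l m|
          ≤ (2*(n:ℝ)*M₀^2*C₀) * ω k m ^ θ := by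
        intro r j
        rw [abs_mul]
        have h1 := DavieAux.gg_diff f M₀ (γ-2) hM₀.le hfb hfdiff hfd'
          (fun i' j' u v => hfH i' j' u v) i r j (y l) (y k)
        have hA1 : |A r j l m| ≤ ω k m ^(2/p) :=
          le_trans (hAb l m hlm hmK r j) (Real.rpow_le_rpow hv0 hvw (by positivity))
        have h2 : |DavieAux.gg f i r j (y l) - DavieAux.gg f i r j (y k)|
            ≤ (n:ℝ)*(M₀^2*(C₀ * ω k m ^ (1/p) + C₀ * ω k m ^ ((1/p)*(γ-2)))) := by
          refine le_trans h1 ?_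
          apply mul_le_mul_of_nonneg_left _ (by positivity)
          apply mul_le_mul_of_nonneg_left _ (by positivity)
          exact add_le_add hynorm' hyβ
        calc |DavieAux.gg f i r j (y l) - DavieAux.gg f i r j (y k)| * |A r j l m|
            ≤ ((n:ℝ)*(M₀^2*(C₀ * ω k m ^ (1/p) + C₀ * ω k m ^ ((1/p)*(γ-2))))) * (ω k m ^(2/p)) :=
              mul_le_mul h2 hA1 (abs_nonneg _) (by positivity)
          _ = ((n:ℝ)*M₀^2*C₀) * (ω k m ^(1/p) * ω k m ^(2/p))
              + ((n:ℝ)*M₀^2*C₀) * (ω k m ^((1/p)*(γ-2)) * ω k m ^(2/p)) := by ring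
          _ ≤ ((n:ℝ)*M₀^2*C₀) * ω k m ^ θ + ((n:ℝ)*M₀^2*C₀) * ω k m ^ θ := by
              apply add_le_add
              · apply mul_le_mul_of_nonneg_left _ (by positivity)
                exact DavieAux.prod_rpow_le_rpow hw0 hw1 h1p0 h2p0 hθ0 hθ3p'
              · apply mul_le_mul_of_nonneg_left _ (by positivity)
                exact DavieAux.prod_rpow_le_rpow hw0 hw1 (mul_pos h1p0 hβ0) h2p0 hθ0
                  (le_of_eq hθE2)
          _ = (2*(n:ℝ)*M₀^2*C₀) * ω k m ^ θ := by ring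
      calc |∑ r, ∑ j, (DavieAux.gg f i r j (y l) - DavieAux.gg f i r j (y k)) * A r j l m|
          ≤ (d:ℝ) * ((d:ℝ) * ((2*(n:ℝ)*M₀^2*C₀) * ω k m ^ θ)) :=
            DavieAux.abs_sum_le _ _ (fun r => DavieAux.abs_sum_le _ _ (hterm r))
        _ = ((d:ℝ) * ((d:ℝ) * (2*(n:ℝ)*M₀^2*C₀))) * ω k m ^ θ := by ring
    have htri := DavieAux.abs_add₃
      (∑ j, (f i j (y l) - f i j (y k) - fderiv ℝ (f i j) (y k) (y l - y k)) * (x m j - x l j))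
      (∑ j, fderiv ℝ (f i j) (y k) vv * (x m j - x l j))
      (∑ r, ∑ j, (DavieAux.gg f i r j (y l) - DavieAux.gg f i r j (y k)) * A r j l m)
    have hfin : ((d:ℝ) * (M₀ * C₀^2)) * ω k m ^ θ
        + ((d:ℝ) * (M₀ * M₁ * L^(1/p) + (d:ℝ)^2*(n:ℝ)*M₀^3)) * ω k m ^ θ
        + ((d:ℝ) * ((d:ℝ) * (2*(n:ℝ)*M₀^2*C₀))) * ω k m ^ θ = cδ * ω k m ^ θ := by
      rw [hcδdef, ha'def, hbdef]; ring
    linarith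
  -- small-interval J bound : main induction
  have hSJ : ∀ N k l, k ≤ l → l ≤ K → l - k ≤ N → ω k l ≤ L →
      ∀ i, |DavieAux.JJ x A f y k l i| ≤ M₁ * ω k l ^ θ := by
    intro N
    induction N with
    | zero =>
      intro k l hkl hlK hN hωL i
      have hlk : l = k := by omega
      subst hlk
      rw [hJkk l hlK i, abs_zero]
      exact mul_nonneg hM₁0.le (Real.rpow_nonneg (hω0 l l le_rfl hlK) _)
    | succ N ih =>
      intro k l hkl hlK hN hωL i
      have hw0 : 0 ≤ ω k l := hω0 k l hkl hlK
      have hRHS0 : 0 ≤ M₁ * ω k l ^ θ := mul_nonneg hM₁0.le (Real.rpow_nonneg hw0 θ)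
      rcases Nat.lt_or_ge l (k+2) with hsmall | hbig
      · have hcase : l = k ∨ l = k + 1 := by omega
        rcases hcase with h | h
        · subst h
          rw [hJkk l hlK i, abs_zero]
          exact hRHS0
        · subst h
          rw [hJstep k i, abs_zero]
          exact hRHS0
      · -- main case : k + 2 ≤ l
        have hwhalf0 : (0:ℝ) ≤ ω k l / 2 := by linarith
        set P : ℕ → Prop := fun t => k ≤ t ∧ ω k t ≤ ω k l / 2 with hPdef
        have hPk : P k := ⟨le_rfl, by rw [hωkk k (le_trans hkl hlK)]; linarith⟩
        have hkl1 : k ≤ l - 1 := by omega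
        set m := Nat.findGreatest P (l-1) with hmdef
        have hPm : P m := Nat.findGreatest_spec hkl1 hPk
        have hmle : m ≤ l - 1 := Nat.findGreatest_le _
        obtain ⟨hkm, hωkm⟩ := hPm
        have hm1l : m + 1 ≤ l := by omega
        have hmK : m ≤ K := by omega
        have hm1K : m + 1 ≤ K := by omega
        have hωm1l : ω (m+1) l ≤ ω k l / 2 := by
          rcases eq_or_lt_of_le hm1l with heq | hlt
          · rw [heq, hωkk l hlK]; linarith
          · have hlt1 : Nat.findGreatest P (l-1) < m + 1 := by rw [← hmdef]; omega
            have hnP : ¬ P (m+1) := Nat.findGreatest_is_greatest hlt1 (by omega)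
            have hgt : ω k l / 2 < ω k (m+1) := by
              by_contra hcon
              push_neg at hcon
              exact hnP ⟨by omega, hcon⟩
            have hsup := hsuper k (m+1) l (by omega) (le_of_lt hlt) hlK
            linarith
        have hωkmL : ω k m ≤ L :=
          le_trans (hmono k k m l le_rfl hkm (by omega) hlK) hωL
        have hJkm : ∀ i', |DavieAux.JJ x A f y k m i'| ≤ M₁ * ω k m ^ θ :=
          ih k m hkm hmK (by omega) hωkmL
        have hwhalf : ∀ u, 0 ≤ u → u ≤ ω k l / 2 → u ^ θ ≤ (ω k l / 2) ^ θ :=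
          fun u h1 h2 => Real.rpow_le_rpow h1 h2 hθ0.le
        have harith : M₁ * (ω k l / 2)^θ + M₁ * (ω k l / 2)^θ
            + (cδ * ω k l ^θ + cδ * ω k l ^θ) ≤ M₁ * ω k l ^θ := by
          have h4 : (0:ℝ) ≤ ω k l ^θ := Real.rpow_nonneg hw0 θ
          have h5 := mul_le_mul_of_nonneg_right hKey h4
          have hhalf : 2 * (ω k l / 2)^θ = (2:ℝ)^((1:ℝ)-θ) * ω k l ^θ := by
            calc 2 * (ω k l / 2)^θ = 2 * (ω k l ^θ / 2^θ) := by
                  rw [Real.div_rpow hw0 (by norm_num)]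
              _ = (2/2^θ) * ω k l ^θ := by ring
              _ = (2:ℝ)^((1:ℝ)-θ) * ω k l ^θ := by
                  rw [Real.rpow_sub (by norm_num : (0:ℝ) < 2), Real.rpow_one]
          have h9 : M₁ * (2 * (ω k l / 2)^θ) = M₁ * ((2:ℝ)^((1:ℝ)-θ) * ω k l ^θ) := by
            rw [hhalf]
          linarith [h5, h9]
        have hkmθ : ω k m ^ θ ≤ (ω k l / 2)^θ := hwhalf _ (hω0 k m hkm hmK) hωkm
        have hJkmb : |DavieAux.JJ x A f y k m i| ≤ M₁ * (ω k l / 2)^θ :=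
          le_trans (hJkm i) (mul_le_mul_of_nonneg_left hkmθ hM₁0.le)
        have hcδw0 : 0 ≤ cδ * ω k l ^ θ := mul_nonneg hcδ0 (Real.rpow_nonneg hw0 _)
        have hMhalf0 : 0 ≤ M₁ * (ω k l / 2)^θ :=
          mul_nonneg hM₁0.le (Real.rpow_nonneg hwhalf0 _)
        rcases eq_or_lt_of_le hm1l with heq | hlt
        · -- m + 1 = l
          have hδ := hDB k m l hkm (by omega) hlK hωL hJkm i
          have hJml : DavieAux.JJ x A f y m l i = 0 := by
            rw [← heq]; exact hJstep m i
          have hdec := DavieAux.abs_decomp (DavieAux.JJ x A f y k l i)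
            (DavieAux.JJ x A f y k m i) (DavieAux.JJ x A f y m l i)
          simp only [hJml, sub_zero, abs_zero, add_zero] at hdec hδ
          linarith
        · -- m + 1 < l
          have hωkm1L : ω k (m+1) ≤ L :=
            le_trans (hmono k k (m+1) l le_rfl (by omega) (by omega) hlK) hωL
          have hJkm1 : ∀ i', |DavieAux.JJ x A f y k (m+1) i'| ≤ M₁ * ω k (m+1) ^ θ :=
            ih k (m+1) (by omega) (by omega) (by omega) hωkm1L
          have hJm1l : ∀ i', |DavieAux.JJ x A f y (m+1) l i'| ≤ M₁ * ω (m+1) l ^ θ :=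
            ih (m+1) l (by omega) hlK (by omega)
              (le_trans (hmono k (m+1) l l (by omega) (by omega) le_rfl hlK) hωL)
          have hδ1 := hDB k m (m+1) hkm (by omega) hm1K hωkm1L hJkm i
          have hδ2 := hDB k (m+1) l (by omega) (by omega) hlK hωL hJkm1 i
          have hJmm1 : DavieAux.JJ x A f y m (m+1) i = 0 := hJstep m i
          have hδ1' : |DavieAux.JJ x A f y k (m+1) i - DavieAux.JJ x A f y k m i
              - DavieAux.JJ x A f y m (m+1) i| ≤ cδ * ω k l ^ θ := by
            refine le_trans hδ1 ?_
            apply mul_le_mul_of_nonneg_left _ hcδ0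
            exact Real.rpow_le_rpow (hω0 k (m+1) (by omega) hm1K)
              (hmono k k (m+1) l le_rfl (by omega) (by omega) hlK) hθ0.le
          have e1 : |DavieAux.JJ x A f y k (m+1) i| ≤ M₁ * (ω k l / 2)^θ + cδ * ω k l ^θ := by
            have hd1 := DavieAux.abs_decomp (DavieAux.JJ x A f y k (m+1) i)
              (DavieAux.JJ x A f y k m i) (DavieAux.JJ x A f y m (m+1) i)
            simp only [hJmm1, sub_zero, abs_zero, add_zero] at hd1 hδ1'
            linarith
          have e2 : |DavieAux.JJ x A f y (m+1) l i| ≤ M₁ * (ω k l / 2)^θ :=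
            le_trans (hJm1l i) (mul_le_mul_of_nonneg_left
              (hwhalf _ (hω0 (m+1) l (by omega) hlK) hωm1l) hM₁0.le)
          have hd2 := DavieAux.abs_decomp (DavieAux.JJ x A f y k l i)
            (DavieAux.JJ x A f y k (m+1) i) (DavieAux.JJ x A f y (m+1) l i)
          linarith
  -- unconditional small-interval y bound
  have hSY : ∀ k l, k ≤ l → l ≤ K → ω k l ≤ L →
      ∀ i, |y l i - y k i| ≤ C₀ * ω k l ^ (1/p) := fun k l h1 h2 h3 =>
    hSYof k l h1 h2 h3 (hSJ (l-k) k l h1 h2 le_rfl h3)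
  -- global y bound
  have hGY : ∀ N k l, k ≤ l → l ≤ K → l - k ≤ N → ∀ i,
      |y l i - y k i| ≤ C₃ * (1 + 2 * ω k l / L) * ω k l ^ (1/p) := by
    intro N
    induction N with
    | zero =>
      intro k l hkl hlK hN i
      have hlk : l = k := by omega
      subst hlk
      rw [sub_self, abs_zero]
      have hw0 : 0 ≤ ω l l := hω0 l l le_rfl hlK
      have h1 : (0:ℝ) ≤ 1 + 2 * ω l l / L := by
        have : (0:ℝ) ≤ 2 * ω l l / L := div_nonneg (by linarith) hL0.le
        linarith
      exact mul_nonneg (mul_nonneg hC₃0 h1) (Real.rpow_nonneg hw0 _)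
    | succ N ih =>
      intro k l hkl hlK hN i
      have hw0 : 0 ≤ ω k l := hω0 k l hkl hlK
      have hfac1 : (1:ℝ) ≤ 1 + 2 * ω k l / L := by
        have : (0:ℝ) ≤ 2 * ω k l / L := div_nonneg (by linarith) hL0.le
        linarith
      rcases le_or_gt (ω k l) L with hsm | hbig
      · calc |y l i - y k i| ≤ C₀ * ω k l ^ (1/p) := hSY k l hkl hlK hsm i
          _ ≤ C₃ * (1 + 2*ω k l/L) * ω k l ^ (1/p) := by
            apply mul_le_mul_of_nonneg_right _ (Real.rpow_nonneg hw0 _)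
            have hC₀C₃ : C₀ ≤ C₃ := by rw [hC₃def]; linarith
            calc C₀ ≤ C₃ := hC₀C₃
              _ = C₃ * 1 := (mul_one _).symm
              _ ≤ C₃ * (1 + 2*ω k l/L) := mul_le_mul_of_nonneg_left hfac1 hC₃0
      · have hkl' : k < l := by
          rcases eq_or_lt_of_le hkl with h | h
          · exfalso
            rw [← h, hωkk k (le_trans hkl hlK)] at hbig
            linarith
          · exact h
        set P : ℕ → Prop := fun t => k ≤ t ∧ ω k t ≤ L with hP2
        have hPk : P k := ⟨le_rfl, by rw [hωkk k (le_trans hkl hlK)]; exact hL0.le⟩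
        have hkl1 : k ≤ l - 1 := by omega
        set m := Nat.findGreatest P (l-1) with hm2
        have hPm : P m := Nat.findGreatest_spec hkl1 hPk
        have hmle : m ≤ l - 1 := Nat.findGreatest_le _
        obtain ⟨hkm, hωkm⟩ := hPm
        have hm1l : m + 1 ≤ l := by omega
        have hmK : m ≤ K := by omega
        have hm1K : m+1 ≤ K := by omega
        have hωkm1 : L < ω k (m+1) := by
          rcases eq_or_lt_of_le hm1l with heq | hlt
          · rw [heq]; exact hbig
          · have hlt1 : Nat.findGreatest P (l-1) < m + 1 := by rw [← hm2]; omega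
            have hnP : ¬ P (m+1) := Nat.findGreatest_is_greatest hlt1 (by omega)
            by_contra hcon
            push_neg at hcon
            exact hnP ⟨by omega, hcon⟩
        have ht1 : |y m i - y k i| ≤ C₀ * ω k m ^ (1/p) := hSY k m hkm hmK hωkm i
        have ht2 : |y (m+1) i - y m i| ≤ C₂ * ω m (m+1) ^ (1/p) := hYstep m hm1K i
        have ht3 : |y l i - y (m+1) i|
            ≤ C₃ * (1 + 2*ω (m+1) l/L) * ω (m+1) l ^ (1/p) := ih (m+1) l (by omega) hlK (by omega) i
        have hmm1 : ω k m ^ (1/p) ≤ ω k l ^ (1/p) :=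
          Real.rpow_le_rpow (hω0 k m hkm hmK) (hmono k k m l le_rfl hkm (by omega) hlK)
            (by positivity)
        have hmm2 : ω m (m+1) ^ (1/p) ≤ ω k l ^ (1/p) :=
          Real.rpow_le_rpow (hω0 m (m+1) (by omega) hm1K)
            (hmono k m (m+1) l hkm (by omega) hm1l hlK) (by positivity)
        have hmm3 : ω (m+1) l ^ (1/p) ≤ ω k l ^ (1/p) :=
          Real.rpow_le_rpow (hω0 (m+1) l (by omega) hlK)
            (hmono k (m+1) l l (by omega) (by omega) le_rfl hlK) (by positivity)
        have hsup := hsuper k (m+1) l (by omega) hm1l hlK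
        have hωm1l0 : 0 ≤ ω (m+1) l := hω0 (m+1) l (by omega) hlK
        have hfac2 : (0:ℝ) ≤ 1 + 2*ω (m+1) l/L := by
          have : (0:ℝ) ≤ 2*ω (m+1) l/L := div_nonneg (by linarith) hL0.le
          linarith
        have htri : |y l i - y k i| ≤ |y m i - y k i| + |y (m+1) i - y m i|
            + |y l i - y (m+1) i| := by
          have heq : y l i - y k i = (y m i - y k i) + (y (m+1) i - y m i)
              + (y l i - y (m+1) i) := by ring
          rw [heq]
          exact DavieAux.abs_add₃ _ _ _
        have hkey2 : C₀ + C₂ + C₃*(1 + 2*ω (m+1) l/L) ≤ C₃ * (1 + 2*ω k l/L) := by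
          have h1 : L ≤ ω k l - ω (m+1) l := by linarith
          have h2 : (1:ℝ) ≤ 2*(ω k l - ω (m+1) l)/L := by
            rw [le_div_iff₀ hL0]; linarith
          have h3 : 2*(ω k l - ω (m+1) l)/L = 2*ω k l/L - 2*ω (m+1) l/L := by ring
          have h4 : 2 + 2*ω (m+1) l/L ≤ 1 + 2*ω k l/L := by
            rw [h3] at h2; linarith
          have e1 : C₀ + C₂ + C₃*(1+2*ω (m+1) l/L) = C₃ * (2 + 2*ω (m+1) l/L) := by
            rw [hC₃def]; ring
          rw [e1]
          exact mul_le_mul_of_nonneg_left h4 hC₃0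
        calc |y l i - y k i|
            ≤ C₀ * ω k m ^(1/p) + C₂ * ω m (m+1) ^(1/p)
              + C₃*(1+2*ω (m+1) l/L)*ω (m+1) l ^(1/p) := by linarith
          _ ≤ C₀ * ω k l ^(1/p) + C₂ * ω k l ^(1/p)
              + C₃*(1+2*ω (m+1) l/L)*ω k l ^(1/p) := by
              apply add_le_add
              apply add_le_add
              · exact mul_le_mul_of_nonneg_left hmm1 hC₀0
              · exact mul_le_mul_of_nonneg_left hmm2 hC₂0
              · exact mul_le_mul_of_nonneg_left hmm3 (mul_nonneg hC₃0 hfac2)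
          _ = (C₀ + C₂ + C₃*(1+2*ω (m+1) l/L)) * ω k l ^(1/p) := by ring
          _ ≤ C₃ * (1 + 2*ω k l/L) * ω k l ^(1/p) :=
              mul_le_mul_of_nonneg_right hkey2 (Real.rpow_nonneg hw0 _)
  -- conclusion
  intro k l hkl hlK
  have hw0 : 0 ≤ ω k l := hω0 k l hkl hlK
  have hyb : ∀ i, |y l i - y k i| ≤ Cc * ω k l ^ (1/p) := by
    intro i
    have h1 := hGY (l-k) k l hkl hlK le_rfl i
    have h2 : C₃ * (1 + 2*ω k l/L) ≤ Cc := by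
      rw [hCcdef]
      have h3 : ω k l ≤ Ω := hωΩ k l hkl hlK
      have h4 : 2*ω k l/L ≤ 2*Ω/L := by gcongr
      exact mul_le_mul_of_nonneg_left (by linarith) hC₃0
    exact le_trans h1 (mul_le_mul_of_nonneg_right h2 (Real.rpow_nonneg hw0 _))
  refine ⟨?_, hyb⟩
  intro i
  have hJform : y l i - y k i - (∑ j, f i j (y k) * (x l j - x k j))
      - ∑ r, ∑ j, (∑ h, f h r (y k) * fderiv ℝ (f i j) (y k) (Pi.single h 1)) * A r j k l
      = DavieAux.JJ x A f y k l i := rfl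
  rw [hJform]
  rcases le_or_gt (ω k l) L with hsm | hbig
  · have hM₁Mc : M₁ ≤ Mc := by rw [hMcdef]; exact le_max_left _ _
    exact le_trans (hSJ (l-k) k l hkl hlK le_rfl hsm i)
      (mul_le_mul_of_nonneg_right hM₁Mc (Real.rpow_nonneg hw0 θ))
  · have hd := DavieAux.abs_sub_sub_le (y l i - y k i)
      (∑ j, f i j (y k) * (x l j - x k j))
      (∑ r, ∑ j, DavieAux.gg f i r j (y k) * A r j k l)
    have hJd : DavieAux.JJ x A f y k l i = (y l i - y k i)
        - (∑ j, f i j (y k) * (x l j - x k j))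
        - ∑ r, ∑ j, DavieAux.gg f i r j (y k) * A r j k l := rfl
    have t1 := hS1b k l hkl hlK i
    have t2 := hS2b k l hkl hlK i
    have h2 := h2pa (ω k l) hw0 (hωΩ k l hkl hlK)
    have u1 : (d:ℝ)*((d:ℝ)*((n:ℝ)*M₀^2*ω k l^(2/p)))
        ≤ (d:ℝ)^2*(n:ℝ)*M₀^2*(Ω^(1/p) * ω k l^(1/p)) := by
      have e0 : (d:ℝ)*((d:ℝ)*((n:ℝ)*M₀^2*ω k l^(2/p))) = (d:ℝ)^2*(n:ℝ)*M₀^2*(ω k l^(2/p)) := by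
        ring
      rw [e0]
      exact mul_le_mul_of_nonneg_left h2 (by positivity)
    have hyb' := hyb i
    have e : (Cc + C₂) * ω k l^(1/p) = Cc*ω k l^(1/p) + (d:ℝ)*(M₀*ω k l^(1/p))
        + (d:ℝ)^2*(n:ℝ)*M₀^2*(Ω^(1/p)*ω k l^(1/p)) + (d:ℝ)^2*(n:ℝ)*M₀^2*ω k l^(1/p) := by
      rw [hC₂def]; ring
    have hnn2 : (0:ℝ) ≤ (d:ℝ)^2*(n:ℝ)*M₀^2*ω k l^(1/p) := by positivity
    have hcr : |DavieAux.JJ x A f y k l i| ≤ (Cc + C₂) * ω k l ^ (1/p) := by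
      rw [hJd]
      linarith
    have hpow : ω k l ^ (1/p) ≤ L ^ ((1-γ)/p) * ω k l ^ θ := by
      have hwpos : 0 < ω k l := lt_trans hL0 hbig
      have hsum : (1-γ)/p + θ = 1/p := by rw [hθdef]; ring
      have e1 : ω k l ^ ((1:ℝ)/p) = ω k l ^ ((1-γ)/p) * ω k l ^ θ := by
        rw [← Real.rpow_add hwpos, hsum]
      rw [e1]
      apply mul_le_mul_of_nonneg_right _ (Real.rpow_nonneg hw0 θ)
      rw [show (1-γ)/p = -((γ-1)/p) by ring, Real.rpow_neg hw0, Real.rpow_neg hL0.le]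
      exact inv_anti₀ (Real.rpow_pos_of_pos hL0 _)
        (Real.rpow_le_rpow hL0.le hbig.le (div_nonneg (by linarith) hp0.le))
    calc |DavieAux.JJ x A f y k l i| ≤ (Cc + C₂) * ω k l^(1/p) := hcr
      _ ≤ (Cc + C₂) * (L^((1-γ)/p) * ω k l^θ) :=
          mul_le_mul_of_nonneg_left hpow (by positivity)
      _ = ((Cc + C₂) * L^((1-γ)/p)) * ω k l^θ := by ring
      _ ≤ Mc * ω k l^θ := by
          have hMc2 : (Cc + C₂) * L^((1-γ)/p) ≤ Mc := by
            rw [hMcdef]; exact le_max_right _ _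
          exact mul_le_mul_of_nonneg_right hMc2 (Real.rpow_nonneg hw0 θ)
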